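/- Backward recurrence for the HMM×DFA lookahead table: With an HMM and a DFA M = (Q, 𝒱, δ, q_0, F) over the same vocabulary, assume q(Z_t=z) > 0 for all 1 ≤ t ≤ T and z ∈ ℋ, and define g_t(z, s) = Σ_{x_{t+1:T}} q(X_{t+1:T}=x_{t+1:T} | Z_t=z) · 1[δ̂(s, x_{t+1:T}) ∈ F] for 1 ≤ t < T, together with g_T(z, s) = 1[s ∈ F]. Then for every 1 ≤ t ≤ T−1, z ∈ ℋ, and s ∈ Q: g_t(z, s) = Σ_{x∈𝒱} Σ_{z'∈ℋ} A(z, z') · B(z', x) · g_{t+1}(z', δ(s, x)). -/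
import Mathlib


open scoped Classical

noncomputable section

/-- A hidden Markov model over a finite hidden-state set `H` and a finite
vocabulary `V`: an initial distribution `pi`, a row-stochastic transition
matrix `A`, and a row-stochastic emission matrix `B`. -/
structure HMM (H V : Type*) [Fintype H] [Fintype V] where
  pi : H → ℝ
  A : H → H → ℝ
  B : H → V → ℝ
  pi_nonneg : ∀ z, 0 ≤ pi z
  A_nonneg : ∀ z z', 0 ≤ A z z'
  B_nonneg : ∀ z x, 0 ≤ B z x
  pi_sum_one : ∑ z, pi z = 1
  A_row_sum_one : ∀ z, ∑ z', A z z' = 1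
  B_row_sum_one : ∀ z, ∑ x, B z x = 1

namespace HMM

variable {H V : Type*} [Fintype H] [Fintype V]

/-- The joint probability of a latent-state sequence `z` and an observation
sequence `x` of length `T + 1` (positions are indexed `0, …, T`):
`q(z, x) = π(z₀) B(z₀, x₀) ∏ᵢ A(zᵢ, zᵢ₊₁) B(zᵢ₊₁, xᵢ₊₁)`. -/
def joint (M : HMM H V) (T : ℕ) (z : Fin (T + 1) → H) (x : Fin (T + 1) → V) : ℝ :=
  M.pi (z 0) * M.B (z 0) (x 0) *
    ∏ i : Fin T, (M.A (z i.castSucc) (z i.succ) * M.B (z i.succ) (x i.succ))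

/-- The probability of an event `E` over latent-state and observation
sequences, obtained by summing the joint distribution. -/
def prob (M : HMM H V) (T : ℕ)
    (E : (Fin (T + 1) → H) → (Fin (T + 1) → V) → Prop) : ℝ :=
  ∑ z : Fin (T + 1) → H, ∑ x : Fin (T + 1) → V, if E z x then M.joint T z x else 0

end HMM

/-- A deterministic finite automaton with (finite) state set `Q` over the
vocabulary `V`: a transition function `step`, an initial state `start`, and a
set `accept` of accept states. -/
structure FinDFA (Q V : Type*) [Fintype Q] where
  step : Q → V → Q
  start : Q
  accept : Set Q

namespace FinDFA

variable {Q V : Type*} [Fintype Q]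

/-- The extended transition function `δ̂` on strings: `δ̂(s, ε) = s` and
`δ̂(s, w·x) = δ(δ̂(s, w), x)`. -/
def run (d : FinDFA Q V) (s : Q) (l : List V) : Q :=
  l.foldl d.step s

end FinDFA

/-- The lookahead table
`g_t(z, s) = Σ_{x_{t+1:T}} q(X_{t+1:T} = x_{t+1:T} | Z_t = z) · 1[δ̂(s, x_{t+1:T}) ∈ F]`
for an HMM paired with a DFA over the same vocabulary (positions indexed
`0, …, T`; at `t = T` the suffix is empty and `δ̂(s, ε) = s`). -/
def gtable {H V Q : Type*} [Fintype H] [Fintype V] [Fintype Q]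
    (M : HMM H V) (d : FinDFA Q V) (T : ℕ) (t : Fin (T + 1)) (z : H) (s : Q) : ℝ :=
  ∑ xs : Fin (T - t.val) → V,
    (M.prob T (fun zs x =>
        (∀ j : Fin (T - t.val),
          x ⟨t.val + 1 + j.val, by have := j.isLt; have := t.isLt; omega⟩ = xs j)
        ∧ zs t = z)
      / M.prob T (fun zs _ => zs t = z))
    * (if d.run s (List.ofFn xs) ∈ d.accept then 1 else 0)


set_option linter.unusedSectionVars false

section AuxDev

variable {H V : Type*} [Fintype H] [Fintype V]

/-- backward table -/
def hmmBeta (M : HMM H V) : (n : ℕ) → H → (Fin n → V) → ℝ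
  | 0, _, _ => 1
  | n+1, z, xs => ∑ z' : H, M.A z z' * M.B z' (xs 0) * hmmBeta M n z' (Fin.tail xs)

lemma sum_cons {α : Type*} [Fintype α] (n : ℕ) (F : (Fin (n+1) → α) → ℝ) :
    ∑ q : Fin (n+1) → α, F q = ∑ a : α, ∑ q : Fin n → α, F (Fin.cons a q) := by
  rw [← Equiv.sum_comp (Fin.consEquiv (fun _ : Fin (n+1) => α)) F, Fintype.sum_prod_type]
  rfl

lemma suffix_one (M : HMM H V) : ∀ (n : ℕ) (a : H),
    (∑ q : Fin n → H, ∏ j : Fin n,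
        M.A ((Fin.cons a q : Fin _ → H) j.castSucc) ((Fin.cons a q : Fin _ → H) j.succ)) = 1
  | 0, a => by simp
  | n+1, a => by
    rw [sum_cons]
    have key : ∀ (b : H) (q : Fin n → H),
        (∏ j : Fin (n+1), M.A ((Fin.cons a (Fin.cons b q) : Fin _ → H) j.castSucc)
            ((Fin.cons a (Fin.cons b q) : Fin _ → H) j.succ))
          = M.A a b * ∏ j : Fin n, M.A ((Fin.cons b q : Fin _ → H) j.castSucc) ((Fin.cons b q : Fin _ → H) j.succ) := by
      intro b q
      rw [Fin.prod_univ_succ]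
      simp [← Fin.succ_castSucc]
    simp only [key]
    have h2 : ∀ b : H,
        (∑ q : Fin n → H, M.A a b * ∏ j : Fin n,
            M.A ((Fin.cons b q : Fin _ → H) j.castSucc) ((Fin.cons b q : Fin _ → H) j.succ)) = M.A a b := by
      intro b
      rw [← Finset.mul_sum, suffix_one M n b, mul_one]
    simp only [h2]
    exact M.A_row_sum_one a

lemma suffix_beta (M : HMM H V) : ∀ (n : ℕ) (a : H) (xs : Fin n → V),
    (∑ q : Fin n → H, ∏ j : Fin n,
        (M.A ((Fin.cons a q : Fin _ → H) j.castSucc) ((Fin.cons a q : Fin _ → H) j.succ)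
          * M.B ((Fin.cons a q : Fin _ → H) j.succ) (xs j))) = hmmBeta M n a xs
  | 0, a, xs => by simp [hmmBeta]
  | n+1, a, xs => by
    rw [sum_cons]
    have key : ∀ (b : H) (q : Fin n → H),
        (∏ j : Fin (n+1),
            (M.A ((Fin.cons a (Fin.cons b q) : Fin _ → H) j.castSucc) ((Fin.cons a (Fin.cons b q) : Fin _ → H) j.succ)
              * M.B ((Fin.cons a (Fin.cons b q) : Fin _ → H) j.succ) (xs j)))
          = (M.A a b * M.B b (xs 0)) * ∏ j : Fin n,
              (M.A ((Fin.cons b q : Fin _ → H) j.castSucc) ((Fin.cons b q : Fin _ → H) j.succ)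
                * M.B ((Fin.cons b q : Fin _ → H) j.succ) (Fin.tail xs j)) := by
      intro b q
      rw [Fin.prod_univ_succ]
      simp [← Fin.succ_castSucc, Fin.tail]
    simp only [key]
    have h2 : ∀ b : H,
        (∑ q : Fin n → H, (M.A a b * M.B b (xs 0)) * ∏ j : Fin n,
            (M.A ((Fin.cons b q : Fin _ → H) j.castSucc) ((Fin.cons b q : Fin _ → H) j.succ)
              * M.B ((Fin.cons b q : Fin _ → H) j.succ) (Fin.tail xs j)))
          = (M.A a b * M.B b (xs 0)) * hmmBeta M n b (Fin.tail xs) := by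
      intro b
      rw [← Finset.mul_sum, suffix_beta M n b (Fin.tail xs)]
    simp only [h2]
    simp [hmmBeta]

end AuxDev

section AuxDev2

variable {H V : Type*} [Fintype H] [Fintype V]

def glue (t n : ℕ) (p : Fin (t + 1) → H) (q : Fin n → H) : Fin (t + n + 1) → H :=
  fun k => if h : k.val < t + 1 then p ⟨k.val, h⟩
    else q ⟨k.val - (t + 1), by have := k.isLt; omega⟩

lemma glue_lt {t n : ℕ} (p : Fin (t + 1) → H) (q : Fin n → H) (k : Fin (t + n + 1))
    (h : k.val < t + 1) : glue t n p q k = p ⟨k.val, h⟩ := dif_pos h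

lemma glue_ge {t n : ℕ} (p : Fin (t + 1) → H) (q : Fin n → H) (k : Fin (t + n + 1))
    (h : ¬ k.val < t + 1) :
    glue t n p q k = q ⟨k.val - (t + 1), by have := k.isLt; omega⟩ := dif_neg h

def glueEquiv (t n : ℕ) : ((Fin (t + 1) → H) × (Fin n → H)) ≃ (Fin (t + n + 1) → H) where
  toFun pq := glue t n pq.1 pq.2
  invFun zs := (fun i => zs ⟨i.val, by have := i.isLt; omega⟩,
                fun j => zs ⟨t + 1 + j.val, by have := j.isLt; omega⟩)
  left_inv := by
    rintro ⟨p, q⟩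
    refine Prod.ext ?_ ?_
    · funext i
      simp only [glue]
      rw [dif_pos i.isLt]
    · funext j
      simp only [glue]
      rw [dif_neg (by omega)]
      congr 1
      ext
      simp
  right_inv := by
    intro zs
    funext k
    simp only [glue]
    by_cases h : k.val < t + 1
    · rw [dif_pos h]
    · rw [dif_neg h]
      congr 1
      ext
      simp
      omega

lemma sum_glue (t n : ℕ) (F : (Fin (t + n + 1) → H) → ℝ) :
    ∑ zs : Fin (t + n + 1) → H, F zs
      = ∑ p : Fin (t + 1) → H, ∑ q : Fin n → H, F (glue t n p q) := by
  rw [← Equiv.sum_comp (glueEquiv t n) F, Fintype.sum_prod_type]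
  rfl

lemma glue_t {t n : ℕ} (p : Fin (t + 1) → H) (q : Fin n → H) (h : t < t + n + 1) :
    glue t n p q ⟨t, h⟩ = p ⟨t, Nat.lt_succ_self t⟩ :=
  glue_lt p q ⟨t, h⟩ (Nat.lt_succ_self t)

lemma glue_eval_C (M : HMM H V) (t n : ℕ) (p : Fin (t + 1) → H) (q : Fin n → H) :
    M.pi (glue t n p q 0) * ∏ i : Fin (t + n),
        M.A (glue t n p q i.castSucc) (glue t n p q i.succ)
      = (M.pi (p 0) * ∏ i : Fin t, M.A (p i.castSucc) (p i.succ)) *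
          ∏ j : Fin n,
            M.A ((Fin.cons (p ⟨t, Nat.lt_succ_self t⟩) q : Fin _ → H) j.castSucc)
              ((Fin.cons (p ⟨t, Nat.lt_succ_self t⟩) q : Fin _ → H) j.succ) := by
  have h0 : glue t n p q 0 = p 0 := by
    rw [glue_lt p q 0 (by simp)]
    exact congrArg p (by ext; simp)
  have hsplit := Fin.prod_univ_add (a := t) (b := n)
      (fun i => M.A (glue t n p q i.castSucc) (glue t n p q i.succ))
  rw [h0, hsplit, ← mul_assoc]
  congr 1
  · congr 1
    refine Finset.prod_congr rfl fun i _ => ?_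
    rw [glue_lt p q _ (show ((Fin.castAdd n i).castSucc : Fin (t+n+1)).val < t + 1 by
          simp only [Fin.coe_castSucc, Fin.coe_castAdd]; omega),
        glue_lt p q _ (show ((Fin.castAdd n i).succ : Fin (t+n+1)).val < t + 1 by
          simp only [Fin.val_succ, Fin.coe_castAdd]; omega)]
    exact congrArg₂ M.A (congrArg p (by ext; simp)) (congrArg p (by ext; simp))
  · refine Finset.prod_congr rfl fun j _ => ?_
    have h1 : glue t n p q (Fin.natAdd t j).succ
        = (Fin.cons (p ⟨t, Nat.lt_succ_self t⟩) q : Fin _ → H) j.succ := by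
      rw [glue_ge p q _ (by simp only [Fin.val_succ, Fin.coe_natAdd]; omega), Fin.cons_succ]
      exact congrArg q (by ext; simp)
    have h2 : glue t n p q (Fin.natAdd t j).castSucc
        = (Fin.cons (p ⟨t, Nat.lt_succ_self t⟩) q : Fin _ → H) j.castSucc := by
      rcases j with ⟨jv, hj⟩
      cases jv with
      | zero =>
        rw [glue_lt p q _ (show ((Fin.natAdd t ⟨0, hj⟩).castSucc : Fin (t+n+1)).val < t + 1 by
              simp only [Fin.coe_castSucc, Fin.coe_natAdd]; omega)]
        have e : ((⟨0, hj⟩ : Fin n).castSucc : Fin (n+1)) = 0 := by ext; simp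
        rw [e, Fin.cons_zero]
        exact congrArg p (by ext; simp)
      | succ k =>
        rw [glue_ge p q _ (by simp only [Fin.coe_castSucc, Fin.coe_natAdd]; omega)]
        have e : ((⟨k + 1, hj⟩ : Fin n).castSucc : Fin (n+1)) = (⟨k, by omega⟩ : Fin n).succ := by
          ext; simp
        rw [e, Fin.cons_succ]
        exact congrArg q (by ext; simp; omega)
    rw [h1, h2]

lemma glue_eval_B (M : HMM H V) (t n : ℕ) (p : Fin (t + 1) → H) (q : Fin n → H)
    (xs : Fin n → V) :
    (∏ j : Fin n, M.B (glue t n p q ⟨t + 1 + j.val, by have := j.isLt; omega⟩) (xs j))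
      = ∏ j : Fin n,
          M.B ((Fin.cons (p ⟨t, Nat.lt_succ_self t⟩) q : Fin _ → H) j.succ) (xs j) := by
  refine Finset.prod_congr rfl fun j _ => ?_
  rw [glue_ge p q _ (by simp only []; omega), Fin.cons_succ]
  exact congrArg (fun h => M.B h (xs j)) (congrArg q (by ext; simp))

end AuxDev2

section AuxDev3

variable {H V : Type*} [Fintype H] [Fintype V]

lemma joint_eq (M : HMM H V) (T : ℕ) (zs : Fin (T + 1) → H) (x : Fin (T + 1) → V) :
    M.joint T zs x = (M.pi (zs 0) * ∏ i : Fin T, M.A (zs i.castSucc) (zs i.succ)) *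
      ∏ k : Fin (T + 1), M.B (zs k) (x k) := by
  unfold HMM.joint
  rw [Finset.prod_mul_distrib, Fin.prod_univ_succ (fun k : Fin (T + 1) => M.B (zs k) (x k))]
  ring

lemma xsum (M : HMM H V) (T : ℕ) (zs : Fin (T + 1) → H) :
    ∑ x : Fin (T + 1) → V, M.joint T zs x
      = M.pi (zs 0) * ∏ i : Fin T, M.A (zs i.castSucc) (zs i.succ) := by
  have h : ∀ x : Fin (T + 1) → V, M.joint T zs x
      = (M.pi (zs 0) * ∏ i : Fin T, M.A (zs i.castSucc) (zs i.succ)) *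
        ∏ k : Fin (T + 1), M.B (zs k) (x k) := joint_eq M T zs
  simp only [h, ← Finset.mul_sum]
  rw [← Fintype.prod_sum (fun (k : Fin (T + 1)) (v : V) => M.B (zs k) v)]
  simp [M.B_row_sum_one]

lemma xmarg (M : HMM H V) (t n : ℕ) (zs : Fin (t + n + 1) → H) (xs : Fin n → V) :
    (∑ x : Fin (t + n + 1) → V,
        if (∀ j : Fin n, x ⟨t + 1 + j.val, by have := j.isLt; omega⟩ = xs j)
          then M.joint (t + n) zs x else 0)
      = (M.pi (zs 0) * ∏ i : Fin (t + n), M.A (zs i.castSucc) (zs i.succ)) *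
          ∏ j : Fin n, M.B (zs ⟨t + 1 + j.val, by have := j.isLt; omega⟩) (xs j) := by
  classical
  set C := M.pi (zs 0) * ∏ i : Fin (t + n), M.A (zs i.castSucc) (zs i.succ) with hC
  set f : Fin (t + n + 1) → V → ℝ := fun k v =>
    if h : t + 1 ≤ k.val then
      (if v = xs ⟨k.val - (t + 1), by have := k.isLt; omega⟩ then M.B (zs k) v else 0)
    else M.B (zs k) v with hf
  have f_ge : ∀ (k : Fin (t + n + 1)) (hk : t + 1 ≤ k.val) (v : V),
      f k v = if v = xs ⟨k.val - (t + 1), by have := k.isLt; omega⟩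
        then M.B (zs k) v else 0 := fun k hk v => dif_pos hk
  have f_lt : ∀ (k : Fin (t + n + 1)) (hk : ¬ t + 1 ≤ k.val) (v : V),
      f k v = M.B (zs k) v := fun k hk v => dif_neg hk
  have hx : ∀ x : Fin (t + n + 1) → V,
      (if (∀ j : Fin n, x ⟨t + 1 + j.val, by have := j.isLt; omega⟩ = xs j)
        then M.joint (t + n) zs x else 0)
      = C * ∏ k : Fin (t + n + 1), f k (x k) := by
    intro x
    by_cases h : ∀ j : Fin n, x ⟨t + 1 + j.val, by have := j.isLt; omega⟩ = xs j
    · rw [if_pos h, joint_eq]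
      congr 1
      refine Finset.prod_congr rfl fun k _ => ?_
      by_cases hk : t + 1 ≤ k.val
      · rw [f_ge k hk, if_pos]
        have hj := h ⟨k.val - (t + 1), by have := k.isLt; omega⟩
        have : (⟨t + 1 + (k.val - (t + 1)), by have := k.isLt; omega⟩ : Fin (t + n + 1)) = k := by
          ext; simp; omega
        rw [this] at hj
        exact hj
      · rw [f_lt k hk]
    · rw [if_neg h]
      push_neg at h
      obtain ⟨j, hj⟩ := h
      have hzero : ∏ k : Fin (t + n + 1), f k (x k) = 0 := by
        refine Finset.prod_eq_zero
          (Finset.mem_univ (⟨t + 1 + j.val, by have := j.isLt; omega⟩ : Fin (t + n + 1))) ?_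
        rw [f_ge _ (Nat.le_add_right (t + 1) j.val), if_neg]
        intro hc
        apply hj
        rw [hc]
        congr 1
        ext
        simp
      rw [hzero, mul_zero]
  simp only [hx, ← Finset.mul_sum]
  congr 1
  rw [← Fintype.prod_sum f]
  have hg : ∀ k : Fin (t + n + 1), (∑ v : V, f k v)
      = if h : t + 1 ≤ k.val then
          M.B (zs k) (xs ⟨k.val - (t + 1), by have := k.isLt; omega⟩) else 1 := by
    intro k
    by_cases hk : t + 1 ≤ k.val
    · rw [dif_pos hk]
      simp only [f_ge k hk]
      rw [Finset.sum_ite_eq' Finset.univ]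
      simp
    · rw [dif_neg hk]
      simp only [f_lt k hk]
      exact M.B_row_sum_one (zs k)
  simp only [hg]
  -- now: ∏ k, dite … = ∏ j, B (zs pos_j) (xs j)
  set pos : Fin n → Fin (t + n + 1) := fun j => ⟨t + 1 + j.val, by have := j.isLt; omega⟩ with hpos
  have hinj : ∀ a ∈ Finset.univ, ∀ b ∈ Finset.univ, pos a = pos b → a = b := by
    intro a _ b _ hab
    rw [hpos] at hab
    simp only [Fin.mk.injEq] at hab
    ext
    omega
  have houter : ∏ k : Fin (t + n + 1),
      (if h : t + 1 ≤ k.val then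
          M.B (zs k) (xs ⟨k.val - (t + 1), by have := k.isLt; omega⟩) else 1)
      = ∏ k ∈ Finset.univ.image pos,
          (if h : t + 1 ≤ k.val then
            M.B (zs k) (xs ⟨k.val - (t + 1), by have := k.isLt; omega⟩) else 1) := by
    refine (Finset.prod_subset (Finset.subset_univ _) ?_).symm
    intro k _ hk
    rw [dif_neg]
    intro hc
    apply hk
    refine Finset.mem_image.mpr ⟨⟨k.val - (t + 1), by have := k.isLt; omega⟩,
      Finset.mem_univ _, ?_⟩
    rw [hpos]
    ext
    simp
    omega
  rw [houter, Finset.prod_image hinj]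
  refine Finset.prod_congr rfl fun j _ => ?_
  rw [dif_pos (show t + 1 ≤ (pos j).val from Nat.le_add_right (t + 1) j.val)]
  exact congrArg₂ (fun a b => M.B (zs a) (xs b)) rfl (by ext; simp [hpos] <;> omega)

end AuxDev3

section AuxDev4

variable {H V : Type*} [Fintype H] [Fintype V]

lemma hmm_main (M : HMM H V) (t n : ℕ) (z : H) (xs : Fin n → V) :
    M.prob (t + n) (fun zs x =>
        (∀ j : Fin n, x ⟨t + 1 + j.val, by have := j.isLt; omega⟩ = xs j)
          ∧ zs ⟨t, by omega⟩ = z)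
      = M.prob (t + n) (fun zs _ => zs ⟨t, by omega⟩ = z) * hmmBeta M n z xs := by
  classical
  unfold HMM.prob
  beta_reduce
  have hLin : ∀ zs : Fin (t + n + 1) → H,
      (∑ x : Fin (t + n + 1) → V,
        @ite ℝ ((∀ j : Fin n, x ⟨t + 1 + j.val, by have := j.isLt; omega⟩ = xs j)
            ∧ zs ⟨t, by omega⟩ = z) (Classical.propDecidable _) (M.joint (t + n) zs x) 0)
      = if zs ⟨t, by omega⟩ = z then
          (M.pi (zs 0) * ∏ i : Fin (t + n), M.A (zs i.castSucc) (zs i.succ)) *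
            ∏ j : Fin n, M.B (zs ⟨t + 1 + j.val, by have := j.isLt; omega⟩) (xs j)
        else 0 := by
    intro zs
    by_cases h : zs ⟨t, by omega⟩ = z
    · rw [if_pos h, ← xmarg M t n zs xs]
      refine Finset.sum_congr rfl fun x _ => ?_
      by_cases hx : ∀ j : Fin n, x ⟨t + 1 + j.val, by have := j.isLt; omega⟩ = xs j
      · rw [if_pos (And.intro hx h), if_pos hx]
      · rw [if_neg (fun hc => hx hc.1), if_neg hx]
    · rw [if_neg h]
      refine Finset.sum_eq_zero fun x _ => if_neg (fun hc => h hc.2)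
  have hRin : ∀ zs : Fin (t + n + 1) → H,
      (∑ x : Fin (t + n + 1) → V,
        if zs ⟨t, by omega⟩ = z then M.joint (t + n) zs x else 0)
      = if zs ⟨t, by omega⟩ = z then
          M.pi (zs 0) * ∏ i : Fin (t + n), M.A (zs i.castSucc) (zs i.succ) else 0 := by
    intro zs
    by_cases h : zs ⟨t, by omega⟩ = z
    · rw [if_pos h]
      calc (∑ x : Fin (t + n + 1) → V,
              if zs ⟨t, by omega⟩ = z then M.joint (t + n) zs x else 0)
          = ∑ x : Fin (t + n + 1) → V, M.joint (t + n) zs x :=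
            Finset.sum_congr rfl fun x _ => if_pos h
        _ = _ := xsum M (t + n) zs
    · rw [if_neg h]
      simp [h]
  refine Eq.trans (Finset.sum_congr rfl fun zs _ => hLin zs) ?_
  refine Eq.trans ?_ (congrArg (· * hmmBeta M n z xs)
    (Finset.sum_congr rfl fun zs _ => hRin zs)).symm
  beta_reduce
  rw [sum_glue, sum_glue, Finset.sum_mul]
  refine Finset.sum_congr rfl fun p _ => ?_
  beta_reduce
  by_cases h : p ⟨t, Nat.lt_succ_self t⟩ = z
  · have hq1 : ∀ q : Fin n → H,
        (if glue t n p q ⟨t, by omega⟩ = z then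
          (M.pi (glue t n p q 0) * ∏ i : Fin (t + n),
              M.A (glue t n p q i.castSucc) (glue t n p q i.succ)) *
            ∏ j : Fin n, M.B (glue t n p q ⟨t + 1 + j.val, by have := j.isLt; omega⟩) (xs j)
        else 0)
        = (M.pi (p 0) * ∏ i : Fin t, M.A (p i.castSucc) (p i.succ)) *
            ∏ j : Fin n,
              (M.A ((Fin.cons z q : Fin _ → H) j.castSucc) ((Fin.cons z q : Fin _ → H) j.succ)
                * M.B ((Fin.cons z q : Fin _ → H) j.succ) (xs j)) := by
      intro q
      rw [glue_t, if_pos h, glue_eval_C M t n p q, glue_eval_B M t n p q xs, h,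
        mul_assoc, ← Finset.prod_mul_distrib]
    have hq2 : ∀ q : Fin n → H,
        (if glue t n p q ⟨t, by omega⟩ = z then
          M.pi (glue t n p q 0) * ∏ i : Fin (t + n),
              M.A (glue t n p q i.castSucc) (glue t n p q i.succ)
        else 0)
        = (M.pi (p 0) * ∏ i : Fin t, M.A (p i.castSucc) (p i.succ)) *
            ∏ j : Fin n,
              M.A ((Fin.cons z q : Fin _ → H) j.castSucc) ((Fin.cons z q : Fin _ → H) j.succ) := by
      intro q
      rw [glue_t, if_pos h, glue_eval_C M t n p q, h]
    simp only [hq1, hq2]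
    rw [← Finset.mul_sum, ← Finset.mul_sum, suffix_beta M n z xs, suffix_one M n z, mul_one]
  · have hq1 : ∀ q : Fin n → H, (if glue t n p q ⟨t, by omega⟩ = z then
          (M.pi (glue t n p q 0) * ∏ i : Fin (t + n),
              M.A (glue t n p q i.castSucc) (glue t n p q i.succ)) *
            ∏ j : Fin n, M.B (glue t n p q ⟨t + 1 + j.val, by have := j.isLt; omega⟩) (xs j)
        else 0) = 0 := by
      intro q
      rw [glue_t, if_neg h]
    have hq2 : ∀ q : Fin n → H, (if glue t n p q ⟨t, by omega⟩ = z then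
          M.pi (glue t n p q 0) * ∏ i : Fin (t + n),
              M.A (glue t n p q i.castSucc) (glue t n p q i.succ)
        else 0) = 0 := by
      intro q
      rw [glue_t, if_neg h]
    simp only [hq1, hq2]
    simp

end AuxDev4

section AuxDev5

variable {H V : Type*} [Fintype H] [Fintype V]

lemma hmm_main' (M : HMM H V) (T t n : ℕ) (h : t + n = T) (ht : t < T + 1)
    (z : H) (xs : Fin n → V) :
    M.prob T (fun zs x =>
        (∀ j : Fin n, x ⟨t + 1 + j.val, by have := j.isLt; omega⟩ = xs j) ∧ zs ⟨t, ht⟩ = z)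
      = M.prob T (fun zs _ => zs ⟨t, ht⟩ = z) * hmmBeta M n z xs := by
  subst h
  exact hmm_main M t n z xs

end AuxDev5

section AuxDev6

variable {H V Q : Type*} [Fintype H] [Fintype V] [Fintype Q]

lemma gtable_eq (M : HMM H V) (d : FinDFA Q V) (T : ℕ)
    (tv : ℕ) (htv : tv < T + 1) (z : H) (s : Q)
    (hD : M.prob T (fun zs _ => zs ⟨tv, htv⟩ = z) ≠ 0) :
    gtable M d T ⟨tv, htv⟩ z s
      = ∑ xs : Fin (T - tv) → V, hmmBeta M (T - tv) z xs *
          (if d.run s (List.ofFn xs) ∈ d.accept then 1 else 0) := by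
  unfold gtable
  refine Finset.sum_congr rfl fun xs _ => ?_
  rw [hmm_main' M T tv (T - tv) (by omega) htv z xs, mul_div_cancel_left₀ _ hD]

lemma step2 (M : HMM H V) (d : FinDFA Q V) (n : ℕ) (z : H) (s : Q) :
    (∑ xs : Fin (n + 1) → V, hmmBeta M (n + 1) z xs *
        (if d.run s (List.ofFn xs) ∈ d.accept then 1 else 0))
      = ∑ x : V, ∑ z' : H, M.A z z' * M.B z' x *
          ∑ xs : Fin n → V, hmmBeta M n z' xs *
            (if d.run (d.step s x) (List.ofFn xs) ∈ d.accept then 1 else 0) := by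
  rw [sum_cons]
  refine Finset.sum_congr rfl fun x _ => ?_
  have hterm : ∀ xs : Fin n → V,
      hmmBeta M (n + 1) z (Fin.cons x xs) *
        (if d.run s (List.ofFn (Fin.cons x xs)) ∈ d.accept then 1 else 0)
      = ∑ z' : H, M.A z z' * M.B z' x * (hmmBeta M n z' xs *
          (if d.run (d.step s x) (List.ofFn xs) ∈ d.accept then 1 else 0)) := by
    intro xs
    have hofn : List.ofFn (Fin.cons x xs : Fin (n + 1) → V) = x :: List.ofFn xs := by
      rw [List.ofFn_succ]
      simp
    have hrun : d.run s (x :: List.ofFn xs) = d.run (d.step s x) (List.ofFn xs) := rfl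
    rw [hofn, hrun]
    show hmmBeta M (n + 1) z (Fin.cons x xs) * _ = _
    rw [show hmmBeta M (n + 1) z (Fin.cons x xs)
        = ∑ z' : H, M.A z z' * M.B z' x * hmmBeta M n z' xs by
      simp [hmmBeta, Fin.tail_cons]]
    rw [Finset.sum_mul]
    refine Finset.sum_congr rfl fun z' _ => ?_
    ring
  rw [Finset.sum_congr rfl fun xs _ => hterm xs, Finset.sum_comm]
  refine Finset.sum_congr rfl fun z' _ => ?_
  rw [← Finset.mul_sum]

end AuxDev6

/-- **Backward recurrence for the HMM×DFA lookahead table.** With an HMM and a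
DFA over the same vocabulary (positions indexed `0, …, T`), assume
`q(Z_t = z) > 0` for all positions `t` and hidden states `z`. Then the table
`g` satisfies `g_T(z, s) = 1[s ∈ F]` and, for every position `t < T`, every
hidden state `z`, and every DFA state `s`,
`g_t(z, s) = Σ_{x ∈ 𝒱} Σ_{z' ∈ ℋ} A(z, z') · B(z', x) · g_{t+1}(z', δ(s, x))`. -/
theorem hmm_dfa_gtable_backward_recurrence
    {H V Q : Type*} [Fintype H] [Fintype V] [Fintype Q]
    (M : HMM H V) (d : FinDFA Q V) (T : ℕ)
    (hz : ∀ (t : Fin (T + 1)) (z : H), 0 < M.prob T (fun zs _ => zs t = z)) :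
    (∀ (z : H) (s : Q),
        gtable M d T (Fin.last T) z s = if s ∈ d.accept then 1 else 0) ∧
      (∀ (t : ℕ) (ht : t < T) (z : H) (s : Q),
        gtable M d T ⟨t, by omega⟩ z s
          = ∑ x : V, ∑ z' : H,
              M.A z z' * M.B z' x * gtable M d T ⟨t + 1, by omega⟩ z' (d.step s x)) := by
  constructor
  · intro z s
    have e := gtable_eq M d T T (Nat.lt_succ_self T) z s (hz (Fin.last T) z).ne'
    show gtable M d T ⟨T, Nat.lt_succ_self T⟩ z s = _
    rw [e, show T - T = 0 from Nat.sub_self T]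
    simp [hmmBeta, FinDFA.run]
  · intro t ht z s
    rw [gtable_eq M d T t (by omega) z s (hz ⟨t, by omega⟩ z).ne']
    have hrw : ∀ (x : V) (z' : H),
        gtable M d T ⟨t + 1, by omega⟩ z' (d.step s x)
          = ∑ xs : Fin (T - (t + 1)) → V, hmmBeta M (T - (t + 1)) z' xs *
              (if d.run (d.step s x) (List.ofFn xs) ∈ d.accept then 1 else 0) :=
      fun x z' => gtable_eq M d T (t + 1) (by omega) z' (d.step s x) (hz _ z').ne'
    simp only [hrw]
    obtain ⟨m, hm⟩ : ∃ m, T - t = m + 1 := ⟨T - t - 1, by omega⟩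
    have hm2 : T - (t + 1) = m := by omega
    rw [hm, hm2]
    exact step2 M d m z s
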